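/- (Minimum required equivalent fronthaul capacity, eq. (18)) Fix μ > 0, a = b = 7/2, and a threshold p with 0 < p < 1. For each positive integer K define T_K(p) = min{ T ∈ ℕ : P_b(K, T) ≤ p } (this minimum exists since P_b(K,·) is decreasing with limit 0). Then lim_{K→∞} T_K(p)/K = (1 − p)·μ, where the limit is over positive integers K tending to infinity. -/

import Mathlib

open scoped BigOperators

/-- The distribution of the number of users in the coverage of a cluster of `K` RRUs:
`P_K(n) = b^{Ka} μ^n Γ(n + Ka) / ((μ + b)^{Ka+n} Γ(Ka) n!)` with `a = b = 7/2`. -/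
noncomputable def Puser (μ : ℝ) (K : ℕ) (n : ℕ) : ℝ :=
  (7/2 : ℝ) ^ ((K : ℝ) * (7/2)) * μ ^ n * Real.Gamma ((n : ℝ) + (K : ℝ) * (7/2)) /
    ((μ + 7/2) ^ ((K : ℝ) * (7/2) + (n : ℝ)) * Real.Gamma ((K : ℝ) * (7/2)) *
      (n.factorial : ℝ))

/-- The `n`-th summand of the user blocking probability: `((n − T)/n)·P_K(n)` for
`n ≥ T + 1`, and `0` otherwise. -/
noncomputable def blockTerm (μ : ℝ) (K T : ℕ) (n : ℕ) : ℝ :=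
  if T + 1 ≤ n then (((n : ℝ) - (T : ℝ)) / (n : ℝ)) * Puser μ K n else 0

/-- The user blocking probability `P_b(K,T) = Σ_{n=T+1}^∞ ((n − T)/n)·P_K(n)`. -/
noncomputable def Pblock (μ : ℝ) (K T : ℕ) : ℝ := ∑' n : ℕ, blockTerm μ K T n

/-- The minimum fronthaul capacity of a cluster of `K` RRUs meeting the
blocking-probability requirement `p`: `T_K(p) = min {T : P_b(K,T) ≤ p}`. -/
noncomputable def minCapacity (μ : ℝ) (K : ℕ) (p : ℝ) : ℕ :=
  sInf {T : ℕ | Pblock μ K T ≤ p}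


open Filter Real


noncomputable def nb (r : ℝ) (n : ℕ) : ℝ :=
  Real.Gamma ((n : ℝ) + r) / (Real.Gamma r * (n.factorial : ℝ))

lemma nb_zero {r : ℝ} (hr : 0 < r) : nb r 0 = 1 := by
  simp [nb, div_self (ne_of_gt (Real.Gamma_pos_of_pos hr))]

lemma nb_pos {r : ℝ} (hr : 0 < r) (n : ℕ) : 0 < nb r n := by
  have h1 : (0:ℝ) < (n:ℝ) + r := by positivity
  have := Real.Gamma_pos_of_pos h1
  have := Real.Gamma_pos_of_pos hr
  have : (0:ℝ) < (n.factorial : ℝ) := by positivity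
  unfold nb; positivity

lemma nb_succ {r : ℝ} (hr : 0 < r) (n : ℕ) :
    nb r (n+1) = nb r n * (((n:ℝ) + r) / ((n:ℝ) + 1)) := by
  have h1 : (0:ℝ) < (n:ℝ) + r := by positivity
  have hg : Real.Gamma (((n+1:ℕ):ℝ) + r) = ((n:ℝ) + r) * Real.Gamma ((n:ℝ) + r) := by
    push_cast
    rw [show (n:ℝ) + 1 + r = ((n:ℝ) + r) + 1 by ring, Real.Gamma_add_one (ne_of_gt h1)]
  have hf : ((n+1).factorial : ℝ) = ((n:ℝ)+1) * (n.factorial : ℝ) := by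
    rw [Nat.factorial_succ]; push_cast; ring
  have hΓr := Real.Gamma_pos_of_pos hr
  have hfp : (0:ℝ) < (n.factorial : ℝ) := by positivity
  rw [nb, nb, hg, hf]
  field_simp

lemma summable_nb {r : ℝ} (hr : 0 < r) (k : ℕ) {x : ℝ} (hx0 : 0 < x) (hx1 : x < 1) :
    Summable (fun n : ℕ => (n:ℝ)^k * nb r n * x^n) := by
  set f : ℕ → ℝ := fun n => (n:ℝ)^k * nb r n * x^n with hf
  have hratio : Tendsto (fun n : ℕ =>
      (((n:ℝ)+1)/(n:ℝ))^k * (((n:ℝ) + r)/((n:ℝ)+1)) * x) atTop (nhds x) := by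
    have h1 : Tendsto (fun n : ℕ => ((n:ℝ)+1)/(n:ℝ)) atTop (nhds 1) := by
      have := (tendsto_one_div_atTop_nhds_zero_nat (𝕜 := ℝ)).const_add 1
      simpa using this.congr' (by
        filter_upwards [eventually_gt_atTop 0] with n hn
        have : (n:ℝ) ≠ 0 := Nat.cast_ne_zero.2 hn.ne'
        field_simp)
    have h2 : Tendsto (fun n : ℕ => ((n:ℝ) + r)/((n:ℝ)+1)) atTop (nhds 1) := by
      have := (tendsto_one_div_add_atTop_nhds_zero_nat (𝕜 := ℝ)).const_mul (r - 1)
      have h := this.const_add 1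
      simp only [mul_zero, add_zero] at h
      refine h.congr' ?_
      filter_upwards with n
      have : (n:ℝ) + 1 ≠ 0 := by positivity
      field_simp
      ring
    have := ((h1.pow k).mul h2).mul_const x
    simpa using this
  have hev : ∀ᶠ n : ℕ in atTop, ‖f (n+1)‖ ≤ ((1+x)/2) * ‖f n‖ := by
    have hlt : x < (1+x)/2 := by linarith
    filter_upwards [hratio.eventually_lt_const hlt, eventually_gt_atTop 0] with n hn hn0
    have hnb := nb_pos hr n
    have hnb1 := nb_pos hr (n+1)
    have hnpos : (0:ℝ) < (n:ℝ) := by exact_mod_cast hn0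
    have hfn : ‖f n‖ = (n:ℝ)^k * nb r n * x^n := by
      rw [Real.norm_of_nonneg]; positivity
    have hfn1 : ‖f (n+1)‖ = ((n:ℝ)+1)^k * nb r (n+1) * x^(n+1) := by
      rw [hf]; push_cast
      rw [Real.norm_of_nonneg]; positivity
    rw [hfn, hfn1, nb_succ hr n]
    have key : ((n:ℝ)+1)^k * (nb r n * (((n:ℝ) + r)/((n:ℝ)+1))) * x^(n+1)
        = ((((n:ℝ)+1)/(n:ℝ))^k * (((n:ℝ) + r)/((n:ℝ)+1)) * x) * ((n:ℝ)^k * nb r n * x^n) := by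
      have hn' : (n:ℝ) ≠ 0 := hnpos.ne'
      rw [div_pow]
      field_simp
      ring
    rw [key]
    have hrhs : (0:ℝ) ≤ (n:ℝ)^k * nb r n * x^n := by positivity
    apply mul_le_mul_of_nonneg_right (le_of_lt hn) hrhs
  exact summable_of_ratio_norm_eventually_le (by linarith) hev

lemma hasSum_nb {r q : ℝ} (hr : 0 < r) (hq0 : 0 < q) (hq1 : q < 1) :
    HasSum (fun n : ℕ => (1-q)^r * (nb r n * q^n)) 1 := by
  set ρ : ℝ := (1+q)/2 with hρ
  have hρ0 : 0 < ρ := by rw [hρ]; linarith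
  have hρ1 : ρ < 1 := by rw [hρ]; linarith
  have hqρ : q < ρ := by rw [hρ]; linarith
  set t : Set ℝ := Set.Ioo (-ρ) ρ with ht
  set F : ℝ → ℝ := fun y => ∑' n : ℕ, nb r n * y^n with hF
  set D : ℝ → ℝ := fun y => ∑' n : ℕ, nb r n * ((n:ℝ) * y^(n-1)) with hD
  have Fval : ∀ y : ℝ, F y = ∑' n : ℕ, nb r n * y^n := fun _ => rfl
  have Dval : ∀ y : ℝ, D y = ∑' n : ℕ, nb r n * ((n:ℝ) * y^(n-1)) := fun _ => rfl
  set u : ℕ → ℝ := fun n => nb r n * ((n:ℝ) * ρ^(n-1)) with hu'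
  -- summability of u
  have hu : Summable u := by
    rw [← summable_nat_add_iff 1]
    have : (fun n : ℕ => u (n + 1)) = fun n : ℕ => ((n:ℝ)+r) * (nb r n * ρ^n) := by
      funext n
      have : (0:ℝ) < (n:ℝ)+1 := by positivity
      simp only [hu', nb_succ hr n, Nat.add_sub_cancel]
      push_cast
      field_simp
    rw [this]
    have h1 := summable_nb hr 1 hρ0 hρ1
    have h0 := summable_nb hr 0 hρ0 hρ1
    simp only [pow_one, pow_zero, one_mul] at h1 h0
    have := h1.add (h0.mul_left r)
    refine this.congr fun n => by ring
  have hbound : ∀ (n : ℕ), ∀ y ∈ t, ‖nb r n * ((n:ℝ) * y^(n-1))‖ ≤ u n := by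
    intro n y hy
    have hy' : |y| ≤ ρ := by
      rw [abs_le]; exact ⟨hy.1.le, hy.2.le⟩
    have hnb := nb_pos hr n
    rw [norm_mul, norm_mul, Real.norm_of_nonneg hnb.le,
      Real.norm_of_nonneg (by positivity : (0:ℝ) ≤ (n:ℝ))]
    refine mul_le_mul_of_nonneg_left (mul_le_mul_of_nonneg_left ?_ (by positivity)) hnb.le
    calc ‖y^(n-1)‖ = |y|^(n-1) := by rw [norm_pow]; rfl
    _ ≤ ρ^(n-1) := pow_le_pow_left₀ (abs_nonneg y) hy' _
  have hg : ∀ (n : ℕ), ∀ y ∈ t, HasDerivAt (fun z : ℝ => nb r n * z^n)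
      (nb r n * ((n:ℝ) * y^(n-1))) y := fun n y _ => (hasDerivAt_pow n y).const_mul _
  have h0t : (0:ℝ) ∈ t := by constructor <;> simp [hρ0, hρ0.le] <;> linarith
  have hg0 : Summable (fun n : ℕ => nb r n * (0:ℝ)^n) := by
    apply summable_of_ne_finset_zero (s := {0})
    intro n hn
    simp only [Finset.mem_singleton] at hn
    rw [zero_pow hn, mul_zero]
  have hF' : ∀ y ∈ t, HasDerivAt F (D y) y := fun y hy =>
    hasDerivAt_tsum_of_isPreconnected hu isOpen_Ioo (convex_Ioo _ _).isPreconnected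
      hg hbound h0t hg0 hy
  have hsumF : ∀ y ∈ t, Summable (fun n : ℕ => nb r n * y^n) := by
    intro y hy
    have h0 := summable_nb hr 0 hρ0 hρ1
    simp only [pow_zero, one_mul] at h0
    refine h0.of_norm_bounded fun n => ?_
    have hnb := nb_pos hr n
    rw [norm_mul, Real.norm_of_nonneg hnb.le]
    refine mul_le_mul_of_nonneg_left ?_ hnb.le
    rw [norm_pow, Real.norm_eq_abs]
    exact pow_le_pow_left₀ (abs_nonneg y) (abs_le.2 ⟨hy.1.le, hy.2.le⟩) _
  have hsumD : ∀ y ∈ t, Summable (fun n : ℕ => nb r n * ((n:ℝ) * y^(n-1))) :=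
    fun y hy => hu.of_norm_bounded (fun n => hbound n y hy)
  have hsumE : ∀ y ∈ t, Summable (fun n : ℕ => (n:ℝ) * (nb r n * y^n)) := by
    intro y hy
    have h1 := summable_nb hr 1 hρ0 hρ1
    simp only [pow_one] at h1
    refine h1.of_norm_bounded fun n => ?_
    have hnb := nb_pos hr n
    rw [norm_mul, norm_mul, Real.norm_of_nonneg hnb.le,
      Real.norm_of_nonneg (by positivity : (0:ℝ) ≤ (n:ℝ)), norm_pow, Real.norm_eq_abs]
    have hyρ : |y|^n ≤ ρ^n :=
      pow_le_pow_left₀ (abs_nonneg y) (abs_le.2 ⟨hy.1.le, hy.2.le⟩) _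
    calc (n:ℝ) * (nb r n * |y|^n) ≤ (n:ℝ) * (nb r n * ρ^n) := by
          exact mul_le_mul_of_nonneg_left (mul_le_mul_of_nonneg_left hyρ hnb.le) (by positivity)
      _ = (n:ℝ) * nb r n * ρ^n := by ring
  have hrel : ∀ y ∈ t, (1-y) * D y = r * F y := by
    intro y hy
    have hE : y * D y = ∑' n : ℕ, (n:ℝ) * (nb r n * y^n) := by
      rw [Dval, ← tsum_mul_left]
      refine tsum_congr fun n => ?_
      cases n with
      | zero => simp
      | succ m =>
        simp only [Nat.add_sub_cancel, pow_succ]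
        push_cast
        ring
    have hshift : D y = ∑' n : ℕ, ((n:ℝ)+r) * (nb r n * y^n) := by
      rw [Dval, (hsumD y hy).tsum_eq_zero_add]
      simp only [Nat.cast_zero, zero_mul, mul_zero, zero_add, Nat.add_sub_cancel]
      refine tsum_congr fun n => ?_
      rw [nb_succ hr n]
      have : ((n:ℝ)+1) ≠ 0 := by positivity
      push_cast
      field_simp
    have hsplit : ∑' n : ℕ, ((n:ℝ)+r) * (nb r n * y^n)
        = (∑' n : ℕ, (n:ℝ) * (nb r n * y^n)) + r * F y := by
      rw [Fval, ← tsum_mul_left, ← Summable.tsum_add (hsumE y hy) (((hsumF y hy)).mul_left r)]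
      exact tsum_congr fun n => by ring
    rw [sub_mul, one_mul, hE, hshift, hsplit]
    ring
  set H : ℝ → ℝ := fun y => (1-y)^r * F y with hH
  have hHd : ∀ y ∈ Set.Icc (0:ℝ) q, HasDerivAt H 0 y := by
    intro y hy
    have hyt : y ∈ t := ⟨by linarith [hy.1], by linarith [hy.2]⟩
    have h1y : 0 < 1 - y := by linarith [hy.2]
    have d1 : HasDerivAt (fun z : ℝ => (1-z)^r) (r * (1-y)^(r-1) * (-1)) y := by
      have hx := Real.hasDerivAt_rpow_const (x := 1-y) (p := r) (Or.inl h1y.ne')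
      have h2 : HasDerivAt (fun z : ℝ => 1 - z) (-1) y := (hasDerivAt_id y).const_sub 1
      exact hx.comp y h2
    have hprod := d1.mul (hF' y hyt)
    have hval : r * (1-y)^(r-1) * (-1) * F y + (1-y)^r * D y = 0 := by
      have hpow : (1-y)^r = (1-y)^(r-1) * (1-y) := by
        have h := Real.rpow_add h1y (r-1) 1
        rw [Real.rpow_one] at h
        rw [show r - 1 + 1 = r by ring] at h
        exact h
      rw [hpow]
      have hyrel := hrel y hyt
      linear_combination (1-y)^(r-1) * hyrel
    rw [← hval]
    exact hprod
  have hcont : ContinuousOn H (Set.Icc 0 q) :=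
    fun y hy => ((hHd y hy).continuousAt).continuousWithinAt
  have hconst := constant_of_has_deriv_right_zero hcont
    (fun y hy => ((hHd y (Set.mem_Icc_of_Ico hy)).hasDerivWithinAt))
  have hqIcc : q ∈ Set.Icc (0:ℝ) q := Set.right_mem_Icc.2 hq0.le
  have hHq : H q = H 0 := hconst q hqIcc
  have hF0 : F 0 = 1 := by
    rw [Fval, tsum_eq_single 0 (fun n hn => by rw [zero_pow hn, mul_zero])]
    simp [nb_zero hr]
  have hH0 : H 0 = 1 := by
    have : H 0 = (1-(0:ℝ))^r * F 0 := rfl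
    rw [this, hF0]
    norm_num
  have hkey : (1-q)^r * F q = 1 := by
    calc (1-q)^r * F q = H q := rfl
      _ = H 0 := hHq
      _ = 1 := hH0
  have hqt : q ∈ t := ⟨by linarith, hqρ⟩
  have := ((hsumF q hqt).hasSum).mul_left ((1-q)^r)
  rwa [hkey] at this

section moments

variable {μ : ℝ} (hμ : 0 < μ) {K : ℕ} (hK : 1 ≤ K)

lemma hr_pos (hK : 1 ≤ K) : (0:ℝ) < (K:ℝ) * (7/2) := by
  have : (1:ℝ) ≤ (K:ℝ) := by exact_mod_cast hK
  nlinarith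

include hμ hK in
lemma Puser_eq (n : ℕ) :
    Puser μ K n = ((7/2)/(μ+7/2)) ^ ((K:ℝ)*(7/2)) *
      (nb ((K:ℝ)*(7/2)) n * (μ/(μ+7/2))^n) := by
  have hB : (0:ℝ) < μ + 7/2 := by linarith
  have h1 : (μ + 7/2) ^ ((K:ℝ)*(7/2) + (n:ℝ)) =
      (μ + 7/2) ^ ((K:ℝ)*(7/2)) * (μ + 7/2) ^ (n:ℕ) := by
    rw [Real.rpow_add hB, Real.rpow_natCast]
  have h2 : ((7/2:ℝ)/(μ+7/2)) ^ ((K:ℝ)*(7/2)) =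
      (7/2:ℝ) ^ ((K:ℝ)*(7/2)) / (μ+7/2) ^ ((K:ℝ)*(7/2)) :=
    Real.div_rpow (by norm_num) hB.le _
  have hBr : (0:ℝ) < (μ + 7/2) ^ ((K:ℝ)*(7/2)) := Real.rpow_pos_of_pos hB _
  have hBn : (0:ℝ) < (μ + 7/2) ^ (n:ℕ) := by positivity
  have hf : (0:ℝ) < (n.factorial : ℝ) := by positivity
  rw [Puser, nb, h1, h2, div_pow]
  rcases eq_or_lt_of_le (Real.Gamma_nonneg_of_nonneg (hr_pos hK).le) with hΓ | hΓ
  · rw [← hΓ]; simp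
  · field_simp
include hμ hK in
lemma Puser_pos (n : ℕ) : 0 < Puser μ K n := by
  have hB : (0:ℝ) < μ + 7/2 := by linarith
  rw [Puser_eq hμ hK n]
  have h1 : (0:ℝ) < ((7/2)/(μ+7/2)) ^ ((K:ℝ)*(7/2)) :=
    Real.rpow_pos_of_pos (by positivity) _
  have h2 := nb_pos (hr_pos hK) n
  have h3 : (0:ℝ) < (μ/(μ+7/2))^n := by positivity
  positivity

include hμ hK in
lemma hasSum_Puser : HasSum (Puser μ K) 1 := by
  have hB : (0:ℝ) < μ + 7/2 := by linarith
  have hq0 : 0 < μ/(μ+7/2) := by positivity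
  have hq1 : μ/(μ+7/2) < 1 := (div_lt_one hB).2 (by linarith)
  have h1q : 1 - μ/(μ+7/2) = (7/2)/(μ+7/2) := by field_simp; ring
  have := hasSum_nb (hr_pos hK) hq0 hq1
  rw [h1q] at this
  exact this.congr_fun fun n => Puser_eq hμ hK n

include hμ hK in
lemma summable_pow_Puser (k : ℕ) :
    Summable (fun n : ℕ => (n:ℝ)^k * Puser μ K n) := by
  have hB : (0:ℝ) < μ + 7/2 := by linarith
  have hq0 : 0 < μ/(μ+7/2) := by positivity
  have hq1 : μ/(μ+7/2) < 1 := (div_lt_one hB).2 (by linarith)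
  have := (summable_nb (hr_pos hK) k hq0 hq1).mul_left (((7/2)/(μ+7/2)) ^ ((K:ℝ)*(7/2)))
  refine this.congr fun n => ?_
  rw [Puser_eq hμ hK n]
  ring

include hμ hK in
lemma Puser_rec (n : ℕ) :
    (μ + 7/2) * (((n:ℝ)+1) * Puser μ K (n+1))
      = μ * (((n:ℝ) + (K:ℝ)*(7/2)) * Puser μ K n) := by
  have hB : (0:ℝ) < μ + 7/2 := by linarith
  rw [Puser_eq hμ hK n, Puser_eq hμ hK (n+1), nb_succ (hr_pos hK) n]
  have hn1 : ((n:ℝ)+1) ≠ 0 := by positivity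
  rw [pow_succ]
  field_simp

include hμ hK in
lemma hasSum_mul_Puser :
    HasSum (fun n : ℕ => (n:ℝ) * Puser μ K n) ((K:ℝ) * μ) := by
  have hs1 : Summable (fun n : ℕ => (n:ℝ) * Puser μ K n) := by
    have := summable_pow_Puser hμ hK 1
    simpa using this
  have hs0 : Summable (Puser μ K) := (hasSum_Puser hμ hK).summable
  set A := ∑' n : ℕ, (n:ℝ) * Puser μ K n with hA
  have key : (μ + 7/2) * A = μ * A + μ * ((K:ℝ)*(7/2)) := by
    have e1 : (μ + 7/2) * A = ∑' n : ℕ, (μ+7/2) * ((n:ℝ) * Puser μ K n) := by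
      rw [hA, tsum_mul_left]
    have e2 : ∑' n : ℕ, (μ+7/2) * ((n:ℝ) * Puser μ K n)
        = ∑' n : ℕ, (μ+7/2) * ((((n:ℕ)+1:ℕ):ℝ) * Puser μ K (n+1)) := by
      rw [Summable.tsum_eq_zero_add (hs1.mul_left (μ+7/2))]
      simp only [Nat.cast_zero, zero_mul, mul_zero, zero_add]
    have e3 : ∑' n : ℕ, (μ+7/2) * ((((n:ℕ)+1:ℕ):ℝ) * Puser μ K (n+1))
        = ∑' n : ℕ, μ * (((n:ℝ) + (K:ℝ)*(7/2)) * Puser μ K n) := by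
      refine tsum_congr fun n => ?_
      have hrec := Puser_rec hμ hK n
      push_cast
      linear_combination hrec
    have e4 : ∑' n : ℕ, μ * (((n:ℝ) + (K:ℝ)*(7/2)) * Puser μ K n)
        = μ * A + μ * ((K:ℝ)*(7/2)) := by
      have h := (hs1.hasSum.add ((hasSum_Puser hμ hK).mul_left ((K:ℝ)*(7/2)))).mul_left μ
      rw [mul_one] at h
      have h2 := h.congr_fun (fun n => (by ring :
        μ * (((n:ℝ) + (K:ℝ)*(7/2)) * Puser μ K n)
          = μ * ((n:ℝ) * Puser μ K n + (K:ℝ)*(7/2) * Puser μ K n)))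
      exact h2.tsum_eq.trans (by ring)
    rw [e1, e2, e3, e4]
  have hA_val : A = (K:ℝ) * μ := by
    have h7 : (7/2:ℝ) ≠ 0 := by norm_num
    nlinarith [key]
  rw [← hA_val]
  exact hs1.hasSum

include hμ hK in
lemma hasSum_sq_Puser :
    HasSum (fun n : ℕ => (n:ℝ)^2 * Puser μ K n)
      ((K:ℝ)^2*μ^2 + (K:ℝ)*μ^2/(7/2) + (K:ℝ)*μ) := by
  have hs2 : Summable (fun n : ℕ => (n:ℝ)^2 * Puser μ K n) := summable_pow_Puser hμ hK 2
  have hs1 : Summable (fun n : ℕ => (n:ℝ) * Puser μ K n) := by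
    simpa using summable_pow_Puser hμ hK 1
  set A2 := ∑' n : ℕ, (n:ℝ)^2 * Puser μ K n with hA2
  have key : (μ + 7/2) * A2 = μ * A2 + μ * ((K:ℝ)*(7/2) + 1) * ((K:ℝ)*μ)
      + μ * ((K:ℝ)*(7/2)) := by
    have e1 : (μ + 7/2) * A2 = ∑' n : ℕ, (μ+7/2) * ((n:ℝ)^2 * Puser μ K n) := by
      rw [hA2, tsum_mul_left]
    have e2 : ∑' n : ℕ, (μ+7/2) * ((n:ℝ)^2 * Puser μ K n)
        = ∑' n : ℕ, (μ+7/2) * ((((n:ℕ)+1:ℕ):ℝ)^2 * Puser μ K (n+1)) := by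
      rw [Summable.tsum_eq_zero_add (hs2.mul_left (μ+7/2))]
      norm_num
    have e3 : ∑' n : ℕ, (μ+7/2) * ((((n:ℕ)+1:ℕ):ℝ)^2 * Puser μ K (n+1))
        = ∑' n : ℕ, ((n:ℝ)+1) * (μ * (((n:ℝ) + (K:ℝ)*(7/2)) * Puser μ K n)) := by
      refine tsum_congr fun n => ?_
      have hrec := Puser_rec hμ hK n
      push_cast
      linear_combination ((n:ℝ)+1) * hrec
    have e4 : ∑' n : ℕ, ((n:ℝ)+1) * (μ * (((n:ℝ) + (K:ℝ)*(7/2)) * Puser μ K n))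
        = μ * A2 + μ * ((K:ℝ)*(7/2) + 1) * ((K:ℝ)*μ) + μ * ((K:ℝ)*(7/2)) := by
      have h := ((hs2.hasSum.mul_left μ).add
        ((hasSum_mul_Puser hμ hK).mul_left (μ * ((K:ℝ)*(7/2) + 1)))).add
        (((hasSum_Puser hμ hK).mul_left (μ * ((K:ℝ)*(7/2)))))
      rw [mul_one] at h
      have h2 := h.congr_fun (fun n => (by ring :
        ((n:ℝ)+1) * (μ * (((n:ℝ) + (K:ℝ)*(7/2)) * Puser μ K n))
          = μ * ((n:ℝ)^2 * Puser μ K n) + μ * ((K:ℝ)*(7/2) + 1) * ((n:ℝ) * Puser μ K n)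
            + μ * ((K:ℝ)*(7/2)) * Puser μ K n))
      exact h2.tsum_eq.trans (by ring)
    rw [e1, e2, e3, e4]
  have hA2_val : A2 = (K:ℝ)^2*μ^2 + (K:ℝ)*μ^2/(7/2) + (K:ℝ)*μ := by
    nlinarith [key]
  rw [← hA2_val]
  exact hs2.hasSum

include hμ hK in
lemma hasSum_var_Puser :
    HasSum (fun n : ℕ => ((n:ℝ)/(K:ℝ) - μ)^2 * Puser μ K n)
      (μ * (μ + 7/2) / ((7/2) * (K:ℝ))) := by
  have hK0 : (0:ℝ) < (K:ℝ) := by exact_mod_cast hK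
  have h := (((hasSum_sq_Puser hμ hK).mul_left (1/(K:ℝ)^2)).sub
    ((hasSum_mul_Puser hμ hK).mul_left (2*μ/(K:ℝ)))).add
    ((hasSum_Puser hμ hK).mul_left (μ^2))
  have hfun : ∀ n : ℕ, (1/(K:ℝ)^2) * ((n:ℝ)^2 * Puser μ K n)
      - (2*μ/(K:ℝ)) * ((n:ℝ) * Puser μ K n) + μ^2 * Puser μ K n
      = ((n:ℝ)/(K:ℝ) - μ)^2 * Puser μ K n := by
    intro n
    field_simp
    ring
  have hfun' : ∀ n : ℕ, ((n:ℝ)/(K:ℝ) - μ)^2 * Puser μ K n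
      = (1/(K:ℝ)^2) * ((n:ℝ)^2 * Puser μ K n)
      - (2*μ/(K:ℝ)) * ((n:ℝ) * Puser μ K n) + μ^2 * Puser μ K n := fun n => (hfun n).symm
  have hval : (1/(K:ℝ)^2) * ((K:ℝ)^2*μ^2 + (K:ℝ)*μ^2/(7/2) + (K:ℝ)*μ)
      - (2*μ/(K:ℝ)) * ((K:ℝ)*μ) + μ^2 * 1 = μ * (μ + 7/2) / ((7/2) * (K:ℝ)) := by
    field_simp
    ring
  rw [hval] at h
  exact h.congr_fun hfun'

end moments

section block

variable {μ : ℝ} (hμ : 0 < μ) {K : ℕ} (hK : 1 ≤ K)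

include hμ hK in
lemma blockTerm_aux_nonneg (T n : ℕ) : 0 ≤ blockTerm μ K T n := by
  rw [blockTerm]
  split_ifs with h
  · have hn0 : (0:ℝ) < (n:ℝ) := by
      have : 0 < n := lt_of_lt_of_le (Nat.succ_pos T) h
      exact_mod_cast this
    have hTn : (T:ℝ) + 1 ≤ (n:ℝ) := by exact_mod_cast h
    have hP := Puser_pos hμ hK (μ := μ) (K := K) n
    have hnum : (0:ℝ) ≤ (n:ℝ) - (T:ℝ) := by linarith
    positivity
  · exact le_refl 0

include hμ hK in
lemma blockTerm_aux_le (T n : ℕ) : blockTerm μ K T n ≤ Puser μ K n := by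
  rw [blockTerm]
  have hP := Puser_pos hμ hK (μ := μ) (K := K) n
  split_ifs with h
  · have hn0 : (0:ℝ) < (n:ℝ) := by
      have : 0 < n := lt_of_lt_of_le (Nat.succ_pos T) h
      exact_mod_cast this
    have hTn : (T:ℝ) + 1 ≤ (n:ℝ) := by exact_mod_cast h
    have hcoef : ((n:ℝ) - (T:ℝ)) / (n:ℝ) ≤ 1 := by
      rw [div_le_one hn0]
      have : (0:ℝ) ≤ (T:ℝ) := Nat.cast_nonneg T
      linarith
    nlinarith
  · exact hP.le

include hμ hK in
lemma summable_blockTerm (T : ℕ) : Summable (blockTerm μ K T) := by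
  refine ((hasSum_Puser hμ hK).summable).of_norm_bounded fun n => ?_
  rw [Real.norm_of_nonneg (blockTerm_aux_nonneg hμ hK T n)]
  exact blockTerm_aux_le hμ hK T n

include hμ hK in
lemma Pblock_antitone {T T' : ℕ} (hTT : T ≤ T') : Pblock μ K T' ≤ Pblock μ K T := by
  refine Summable.tsum_le_tsum (fun n => ?_) (summable_blockTerm hμ hK T') (summable_blockTerm hμ hK T)
  rw [blockTerm, blockTerm]
  split_ifs with h1 h2 h2
  · have hn0 : (0:ℝ) < (n:ℝ) := by
      have : 0 < n := lt_of_lt_of_le (Nat.succ_pos T') h1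
      exact_mod_cast this
    have hP := Puser_pos hμ hK (μ := μ) (K := K) n
    have hc : (T:ℝ) ≤ (T':ℝ) := by exact_mod_cast hTT
    have hdiv : ((n:ℝ) - (T':ℝ)) / (n:ℝ) ≤ ((n:ℝ) - (T:ℝ)) / (n:ℝ) :=
      (div_le_div_iff_of_pos_right hn0).2 (by linarith)
    exact mul_le_mul_of_nonneg_right hdiv hP.le
  · exact absurd (le_trans (by omega) h1) h2
  · have h0 := blockTerm_aux_nonneg hμ hK T n
    rw [blockTerm, if_pos h2] at h0
    exact h0
  · exact le_refl 0

include hμ hK in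
lemma Pblock_bound {s ε : ℝ} (hs0 : 0 < s) (hsμ : s < μ)
    (hε0 : 0 < ε) (hεμ : ε ≤ μ/2) {T : ℕ} (hT : |(T:ℝ) - s*(K:ℝ)| ≤ 1) :
    |Pblock μ K T - (1 - s/μ)| ≤ 2/((K:ℝ)*μ) + 2*s*ε/μ^2
      + μ*(μ+7/2)/((7/2)*(K:ℝ)*ε^2) := by
  have hK0 : (0:ℝ) < (K:ℝ) := by exact_mod_cast hK
  set δ : ℝ := 2/((K:ℝ)*μ) + 2*s*ε/μ^2 with hδ
  set g : ℝ := 1 - s/μ with hg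
  have hsμ' : s/μ < 1 := (div_lt_one hμ).2 hsμ
  have hg0 : 0 ≤ g := by rw [hg]; linarith
  have hg1 : g ≤ 1 := by
    rw [hg]
    have : 0 ≤ s/μ := by positivity
    linarith
  have hδ0 : 0 ≤ δ := by rw [hδ]; positivity
  have hpt : ∀ n : ℕ, |blockTerm μ K T n - g * Puser μ K n|
      ≤ δ * Puser μ K n + (1/ε^2) * (((n:ℝ)/(K:ℝ) - μ)^2 * Puser μ K n) := by
    intro n
    have hP := Puser_pos hμ hK (μ := μ) (K := K) n
    have hb0 := blockTerm_aux_nonneg hμ hK (μ := μ) (K := K) T n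
    have hble := blockTerm_aux_le hμ hK (μ := μ) (K := K) T n
    by_cases hgood : |(n:ℝ)/(K:ℝ) - μ| ≤ ε
    · -- concentration region
      have habs := abs_le.1 hgood
      have hge : μ - ε ≤ (n:ℝ)/(K:ℝ) := by linarith [habs.1]
      have hnK : (K:ℝ)*(μ/2) ≤ (n:ℝ) := by
        have h1 : μ/2 ≤ (n:ℝ)/(K:ℝ) := by linarith
        have h2 := mul_le_mul_of_nonneg_left h1 hK0.le
        calc (K:ℝ)*(μ/2) ≤ (K:ℝ)*((n:ℝ)/(K:ℝ)) := h2
          _ = (n:ℝ) := by field_simp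
      have hn0 : (0:ℝ) < (n:ℝ) := lt_of_lt_of_le (by positivity) hnK
      have hKμn : |(K:ℝ)*μ - (n:ℝ)| ≤ (K:ℝ)*ε := by
        have h3 : |μ - (n:ℝ)/(K:ℝ)| ≤ ε := by rwa [abs_sub_comm] at hgood
        have h4 : (K:ℝ)*μ - (n:ℝ) = (K:ℝ) * (μ - (n:ℝ)/(K:ℝ)) := by field_simp <;> ring
        rw [h4, abs_mul, abs_of_pos hK0]
        exact mul_le_mul_of_nonneg_left h3 hK0.le
      have hkey : |(T:ℝ)/(n:ℝ) - s/μ| ≤ δ := by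
        have hnum : |(T:ℝ)*μ - s*(n:ℝ)| ≤ μ + s*((K:ℝ)*ε) := by
          have h5 : (T:ℝ)*μ - s*(n:ℝ) = μ*((T:ℝ) - s*(K:ℝ)) + s*((K:ℝ)*μ - (n:ℝ)) := by
            ring
          rw [h5]
          calc |μ*((T:ℝ) - s*(K:ℝ)) + s*((K:ℝ)*μ - (n:ℝ))|
              ≤ |μ*((T:ℝ) - s*(K:ℝ))| + |s*((K:ℝ)*μ - (n:ℝ))| := abs_add_le _ _
            _ = μ*|(T:ℝ) - s*(K:ℝ)| + s*|(K:ℝ)*μ - (n:ℝ)| := by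
                rw [abs_mul, abs_mul, abs_of_pos hμ, abs_of_pos hs0]
            _ ≤ μ*1 + s*((K:ℝ)*ε) := by
                have := mul_le_mul_of_nonneg_left hT hμ.le
                have := mul_le_mul_of_nonneg_left hKμn hs0.le
                linarith
            _ = μ + s*((K:ℝ)*ε) := by ring
        have heq : (T:ℝ)/(n:ℝ) - s/μ = ((T:ℝ)*μ - s*(n:ℝ))/((n:ℝ)*μ) := by
          field_simp <;> ring
        rw [heq, abs_div, abs_of_pos (by positivity : (0:ℝ) < (n:ℝ)*μ)]
        rw [div_le_iff₀ (by positivity)]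
        have h6 : δ * ((K:ℝ)*(μ/2)*μ) = μ + s*((K:ℝ)*ε) := by
          rw [hδ]
          field_simp
        calc |(T:ℝ)*μ - s*(n:ℝ)| ≤ μ + s*((K:ℝ)*ε) := hnum
          _ = δ * ((K:ℝ)*(μ/2)*μ) := h6.symm
          _ ≤ δ * ((n:ℝ)*μ) := by
              apply mul_le_mul_of_nonneg_left ?_ hδ0
              nlinarith
      have hvar0 : (0:ℝ) ≤ (1/ε^2) * (((n:ℝ)/(K:ℝ) - μ)^2 * Puser μ K n) := by
        positivity
      by_cases hTn : T + 1 ≤ n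
      · rw [blockTerm, if_pos hTn]
        have hcoef : ((n:ℝ)-(T:ℝ))/(n:ℝ) - g = -((T:ℝ)/(n:ℝ) - s/μ) := by
          rw [hg]
          field_simp <;> ring
        have h7 : |((n:ℝ)-(T:ℝ))/(n:ℝ) - g| ≤ δ := by
          rw [hcoef, abs_neg]
          exact hkey
        calc |((n:ℝ)-(T:ℝ))/(n:ℝ) * Puser μ K n - g * Puser μ K n|
            = |((n:ℝ)-(T:ℝ))/(n:ℝ) - g| * Puser μ K n := by
              rw [← sub_mul, abs_mul, abs_of_pos hP]
          _ ≤ δ * Puser μ K n := mul_le_mul_of_nonneg_right h7 hP.le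
          _ ≤ _ := le_add_of_nonneg_right hvar0
      · rw [blockTerm, if_neg hTn]
        have hTn' : (n:ℝ) ≤ (T:ℝ) := by
          have : n ≤ T := by omega
          exact_mod_cast this
        have h8 : (1:ℝ) ≤ (T:ℝ)/(n:ℝ) := (le_div_iff₀ hn0).2 (by linarith)
        have h9 : g ≤ δ := by
          have : g ≤ (T:ℝ)/(n:ℝ) - s/μ := by rw [hg]; linarith
          exact le_trans this (le_trans (le_abs_self _) hkey)
        have h10 : |0 - g * Puser μ K n| = g * Puser μ K n := by
          rw [zero_sub, abs_neg, abs_of_nonneg (by positivity)]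
        rw [h10]
        calc g * Puser μ K n ≤ δ * Puser μ K n :=
              mul_le_mul_of_nonneg_right h9 hP.le
          _ ≤ _ := le_add_of_nonneg_right hvar0
    · -- tail region
      have h11 : ε < |(n:ℝ)/(K:ℝ) - μ| := lt_of_not_ge hgood
      have h12 : ε^2 ≤ ((n:ℝ)/(K:ℝ) - μ)^2 := by
        have := pow_le_pow_left₀ hε0.le h11.le 2
        rwa [sq_abs] at this
      have h13 : |blockTerm μ K T n - g * Puser μ K n| ≤ Puser μ K n := by
        have hgP0 : 0 ≤ g * Puser μ K n := by positivity
        have hgP1 : g * Puser μ K n ≤ Puser μ K n := by nlinarith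
        rw [abs_le]
        constructor <;> linarith
      have h14 : Puser μ K n ≤ (1/ε^2) * (((n:ℝ)/(K:ℝ) - μ)^2 * Puser μ K n) := by
        have heps2 : (0:ℝ) < ε^2 := by positivity
        have hstep := mul_le_mul_of_nonneg_left
          (mul_le_mul_of_nonneg_right h12 hP.le) (one_div_pos.2 heps2).le
        have hpe : (1/ε^2) * (ε^2 * Puser μ K n) = Puser μ K n := by field_simp
        linarith
      calc |blockTerm μ K T n - g * Puser μ K n| ≤ Puser μ K n := h13
        _ ≤ (1/ε^2) * (((n:ℝ)/(K:ℝ) - μ)^2 * Puser μ K n) := h14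
        _ ≤ _ := le_add_of_nonneg_left (mul_nonneg hδ0 hP.le)
  -- assemble
  have hgP : HasSum (fun n : ℕ => g * Puser μ K n) g := by
    have := (hasSum_Puser hμ hK).mul_left g
    rwa [mul_one] at this
  have hdiff : Pblock μ K T - g
      = ∑' n : ℕ, (blockTerm μ K T n - g * Puser μ K n) := by
    rw [Pblock, Summable.tsum_sub (summable_blockTerm hμ hK T) hgP.summable, hgP.tsum_eq]
  have hBnd : HasSum (fun n : ℕ => δ * Puser μ K n
      + (1/ε^2) * (((n:ℝ)/(K:ℝ) - μ)^2 * Puser μ K n))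
      (δ * 1 + (1/ε^2) * (μ * (μ + 7/2) / ((7/2) * (K:ℝ)))) :=
    ((hasSum_Puser hμ hK).mul_left δ).add ((hasSum_var_Puser hμ hK).mul_left (1/ε^2))
  have hsumabs : Summable (fun n : ℕ => |blockTerm μ K T n - g * Puser μ K n|) :=
    Summable.of_nonneg_of_le (fun n => abs_nonneg _) hpt hBnd.summable
  calc |Pblock μ K T - g|
      = |∑' n : ℕ, (blockTerm μ K T n - g * Puser μ K n)| := by rw [hdiff]
    _ ≤ ∑' n : ℕ, |blockTerm μ K T n - g * Puser μ K n| := by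
        have := norm_tsum_le_tsum_norm (f := fun n : ℕ =>
          blockTerm μ K T n - g * Puser μ K n) (by simpa [Real.norm_eq_abs] using hsumabs)
        simpa [Real.norm_eq_abs] using this
    _ ≤ ∑' n : ℕ, (δ * Puser μ K n
        + (1/ε^2) * (((n:ℝ)/(K:ℝ) - μ)^2 * Puser μ K n)) :=
        Summable.tsum_le_tsum hpt hsumabs hBnd.summable
    _ = δ * 1 + (1/ε^2) * (μ * (μ + 7/2) / ((7/2) * (K:ℝ))) := hBnd.tsum_eq
    _ = δ + μ*(μ+7/2)/((7/2)*(K:ℝ)*ε^2) := by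
        rw [mul_one]
        congr 1
        field_simp

end block

lemma Pblock_tendsto {μ : ℝ} (hμ : 0 < μ) {s : ℝ} (hs0 : 0 < s) (hsμ : s < μ) :
    Filter.Tendsto (fun K : ℕ => Pblock μ K ⌈s*(K:ℝ)⌉₊) atTop (nhds (1 - s/μ)) := by
  rw [Metric.tendsto_atTop]
  intro η hη
  set ε : ℝ := min (μ/2) (η*μ^2/(8*s)) with hε
  have hε0 : 0 < ε := lt_min (by positivity) (by positivity)
  have hεμ : ε ≤ μ/2 := min_le_left _ _
  have h2sε : 2*s*ε/μ^2 ≤ η/4 := by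
    have h1 : ε ≤ η*μ^2/(8*s) := min_le_right _ _
    rw [div_le_iff₀ (by positivity : (0:ℝ) < μ^2)]
    calc 2*s*ε ≤ 2*s*(η*μ^2/(8*s)) := by
          apply mul_le_mul_of_nonneg_left h1 (by positivity)
      _ = η/4*μ^2 := by field_simp; ring
  set C : ℝ := μ*(μ+7/2)/((7/2)*ε^2) with hC
  have hten : Filter.Tendsto (fun K : ℕ => (2/μ)/(K:ℝ) + C/(K:ℝ)) atTop (nhds 0) := by
    have := (tendsto_const_div_atTop_nhds_zero_nat (2/μ)).add
      (tendsto_const_div_atTop_nhds_zero_nat C)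
    simpa using this
  have hev1 : ∀ᶠ K : ℕ in atTop, (2/μ)/(K:ℝ) + C/(K:ℝ) < η/2 :=
    hten.eventually_lt_const (by linarith)
  have hfin : ∀ᶠ K : ℕ in atTop,
      dist (Pblock μ K ⌈s*(K:ℝ)⌉₊) (1 - s/μ) < η := by
    filter_upwards [hev1, eventually_ge_atTop 1] with K hKlt hK1
    have hK0 : (0:ℝ) < (K:ℝ) := by exact_mod_cast hK1
    have hsK0 : (0:ℝ) ≤ s*(K:ℝ) := by positivity
    have hT : |((⌈s*(K:ℝ)⌉₊ : ℕ):ℝ) - s*(K:ℝ)| ≤ 1 := by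
      have hle := Nat.le_ceil (s*(K:ℝ))
      have hlt := Nat.ceil_lt_add_one hsK0
      rw [abs_le]
      constructor <;> linarith
    have hbnd := Pblock_bound hμ hK1 hs0 hsμ hε0 hεμ hT
    rw [Real.dist_eq]
    have he1 : 2/((K:ℝ)*μ) = (2/μ)/(K:ℝ) := by
      rw [div_div]
      ring_nf
    have he2 : μ*(μ+7/2)/((7/2)*(K:ℝ)*ε^2) = C/(K:ℝ) := by
      rw [hC, div_div]
      congr 1
      ring
    rw [he1, he2] at hbnd
    calc |Pblock μ K ⌈s*(K:ℝ)⌉₊ - (1 - s/μ)|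
        ≤ (2/μ)/(K:ℝ) + 2*s*ε/μ^2 + C/(K:ℝ) := hbnd
      _ < η/2 + η/4 := by linarith
      _ < η := by linarith
  exact Filter.eventually_atTop.1 hfin

/-- eq. (18): for `0 < p < 1`,
`lim_{K→∞} T_K(p)/K = (1 − p)·μ`. -/
theorem minCapacity_limit (μ : ℝ) (hμ : 0 < μ) (p : ℝ) (hp0 : 0 < p) (hp1 : p < 1) :
    Filter.Tendsto (fun K : ℕ => (minCapacity μ K p : ℝ) / (K : ℝ))
      Filter.atTop (nhds ((1 - p) * μ)) := by
  rw [Metric.tendsto_atTop]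
  intro η hη
  have hp1' : 0 < 1 - p := by linarith
  set η' : ℝ := min (η/2) (min ((1-p)*μ/2) (p*μ/2)) with hη'
  have hη'0 : 0 < η' := lt_min (by linarith) (lt_min (by positivity) (by positivity))
  have hη'η : η' ≤ η/2 := min_le_left _ _
  have hη'1 : η' ≤ (1-p)*μ/2 := le_trans (min_le_right _ _) (min_le_left _ _)
  have hη'2 : η' ≤ p*μ/2 := le_trans (min_le_right _ _) (min_le_right _ _)
  set s₁ : ℝ := (1-p)*μ - η' with hs₁
  set s₂ : ℝ := (1-p)*μ + η' with hs₂
  have hs₁0 : 0 < s₁ := by rw [hs₁]; nlinarith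
  have hs₁μ : s₁ < μ := by rw [hs₁]; nlinarith
  have hs₂0 : 0 < s₂ := by rw [hs₂]; positivity
  have hs₂μ : s₂ < μ := by rw [hs₂]; nlinarith
  have hdivpos : 0 < η'/μ := by positivity
  have hval₂ : 1 - s₂/μ < p := by
    have h : s₂/μ = (1-p) + η'/μ := by rw [hs₂]; field_simp
    rw [h]
    linarith
  have hval₁ : p < 1 - s₁/μ := by
    have h : s₁/μ = (1-p) - η'/μ := by rw [hs₁]; field_simp
    rw [h]
    linarith
  have hev₂ : ∀ᶠ K : ℕ in atTop, Pblock μ K ⌈s₂*(K:ℝ)⌉₊ ≤ p :=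
    ((Pblock_tendsto hμ hs₂0 hs₂μ).eventually_lt_const hval₂).mono fun K h => h.le
  have hev₁ : ∀ᶠ K : ℕ in atTop, p < Pblock μ K ⌈s₁*(K:ℝ)⌉₊ :=
    (Pblock_tendsto hμ hs₁0 hs₁μ).eventually_const_lt hval₁
  have hevdiv : ∀ᶠ K : ℕ in atTop, 1/(K:ℝ) < η/2 := by
    exact tendsto_one_div_atTop_nhds_zero_nat.eventually_lt_const (by linarith)
  have hfin : ∀ᶠ K : ℕ in atTop,
      dist ((minCapacity μ K p : ℝ) / (K : ℝ)) ((1 - p) * μ) < η := by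
    filter_upwards [hev₂, hev₁, hevdiv, eventually_ge_atTop 1] with K hK2 hK1 hKdiv hK1'
    have hK0 : (0:ℝ) < (K:ℝ) := by exact_mod_cast hK1'
    set S : Set ℕ := {T : ℕ | Pblock μ K T ≤ p} with hS
    have hmem : ⌈s₂*(K:ℝ)⌉₊ ∈ S := hK2
    have hne : S.Nonempty := ⟨_, hmem⟩
    have hTmem : sInf S ∈ S := Nat.sInf_mem hne
    have hupper : sInf S ≤ ⌈s₂*(K:ℝ)⌉₊ := Nat.sInf_le hmem
    have hlower : ⌈s₁*(K:ℝ)⌉₊ < sInf S := by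
      by_contra hcon
      push_neg at hcon
      have hmono := Pblock_antitone hμ hK1' (μ := μ) hcon
      have : Pblock μ K ⌈s₁*(K:ℝ)⌉₊ ≤ p := le_trans hmono hTmem
      linarith
    have hxup : ((sInf S : ℕ):ℝ) < s₂*(K:ℝ) + 1 := by
      have h1 : ((sInf S : ℕ):ℝ) ≤ ((⌈s₂*(K:ℝ)⌉₊ : ℕ):ℝ) := by exact_mod_cast hupper
      have h2 : ((⌈s₂*(K:ℝ)⌉₊ : ℕ):ℝ) < s₂*(K:ℝ) + 1 := Nat.ceil_lt_add_one (by positivity)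
      linarith
    have hxlo : s₁*(K:ℝ) + 1 ≤ ((sInf S : ℕ):ℝ) := by
      have h1 : ((⌈s₁*(K:ℝ)⌉₊ : ℕ):ℝ) + 1 ≤ ((sInf S : ℕ):ℝ) := by
        have : ⌈s₁*(K:ℝ)⌉₊ + 1 ≤ sInf S := hlower
        exact_mod_cast this
      have h2 : s₁*(K:ℝ) ≤ ((⌈s₁*(K:ℝ)⌉₊ : ℕ):ℝ) := Nat.le_ceil _
      linarith
    have hKη : 1 < η/2 * (K:ℝ) := by
      rw [div_lt_iff₀ hK0] at hKdiv
      linarith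
    have hminC : (minCapacity μ K p : ℝ) = ((sInf S : ℕ):ℝ) := by
      rw [minCapacity]
    rw [Real.dist_eq, hminC, abs_lt]
    constructor
    · have hgoal : ((1-p)*μ - η) * (K:ℝ) < ((sInf S : ℕ):ℝ) := by
        rw [hs₁] at hxlo
        nlinarith
      have := (div_lt_div_iff_of_pos_right hK0).2 hgoal
      rw [mul_div_cancel_right₀ _ hK0.ne'] at this
      linarith
    · have hgoal : ((sInf S : ℕ):ℝ) < ((1-p)*μ + η) * (K:ℝ) := by
        rw [hs₂] at hxup
        nlinarith
      have := (div_lt_div_iff_of_pos_right hK0).2 hgoal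
      rw [mul_div_cancel_right₀ _ hK0.ne'] at this
      linarith
  exact Filter.eventually_atTop.1 hfin
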